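/- Let K be a field, Λ a finite-dimensional K-algebra, and let 0 → A →f B →g U → 0 be an almost split sequence of finite-dimensional left Λ-modules in which U is uniserial. Suppose B is the internal direct sum of a family (Bᵢ)_{i ∈ I} of indecomposable submodules, and for each i let gᵢ : Bᵢ → U denote the restriction of g to Bᵢ. Then the number of indices i ∈ I for which gᵢ is surjective is at most length(soc A), where length denotes composition length. -/

import Mathlib

/-- A module is *uniserial* if its submodules are totally ordered by inclusion. -/
def IsUniserialModule (R M : Type) [Ring R] [AddCommGroup M] [Module R M] : Prop :=
  ∀ N₁ N₂ : Submodule R M, N₁ ≤ N₂ ∨ N₂ ≤ N₁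

/-- The Jacobson radical of the ring `R` (the intersection of the maximal left ideals). -/
noncomputable def ringJacobson (R : Type) [Ring R] : Ideal R :=
  Ideal.jacobson (⊥ : Ideal R)

/-- The submodule `J•M`, where `J` is the Jacobson radical of `R`. -/
noncomputable def radicalSubmodule (R M : Type) [Ring R] [AddCommGroup M] [Module R M] :
    Submodule R M :=
  ringJacobson R • (⊤ : Submodule R M)

/-- The socle of a module: the sum of all of its simple submodules. -/
def socle (R M : Type) [Ring R] [AddCommGroup M] [Module R M] : Submodule R M :=
  sSup {N : Submodule R M | IsSimpleModule R ↥N}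

/-- A linear map is a split monomorphism if it has a left inverse. -/
def IsSplitMono {R M N : Type} [Ring R] [AddCommGroup M] [Module R M]
    [AddCommGroup N] [Module R N] (f : M →ₗ[R] N) : Prop :=
  ∃ g : N →ₗ[R] M, g ∘ₗ f = LinearMap.id

/-- A linear map is a split epimorphism if it has a right inverse. -/
def IsSplitEpi {R M N : Type} [Ring R] [AddCommGroup M] [Module R M]
    [AddCommGroup N] [Module R N] (f : M →ₗ[R] N) : Prop :=
  ∃ g : N →ₗ[R] M, f ∘ₗ g = LinearMap.id

/-- A linear map `f : M → N` is *irreducible* if it is neither a split monomorphism nor a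
split epimorphism, and in any factorization `f = g ∘ h`, either `h` is a split monomorphism
or `g` is a split epimorphism. -/
def IsIrreducibleMap {R M N : Type} [Ring R] [AddCommGroup M] [Module R M]
    [AddCommGroup N] [Module R N] (f : M →ₗ[R] N) : Prop :=
  ¬ IsSplitMono f ∧ ¬ IsSplitEpi f ∧
    ∀ (X : Type) [AddCommGroup X] [Module R X] (h : M →ₗ[R] X) (g : X →ₗ[R] N),
      g ∘ₗ h = f → IsSplitMono h ∨ IsSplitEpi g

/-- A module is *indecomposable* if it is nonzero and is not the internal direct sum of two
nonzero submodules. -/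
def IsIndecomposableModule (R M : Type) [Ring R] [AddCommGroup M] [Module R M] : Prop :=
  Nontrivial M ∧ ∀ N₁ N₂ : Submodule R M, IsCompl N₁ N₂ → N₁ = ⊥ ∨ N₂ = ⊥

/-- The composition length of a module, as the Krull dimension of its lattice of
submodules (the supremum of the lengths of strictly increasing chains of submodules). -/
noncomputable def moduleLength (R M : Type) [Ring R] [AddCommGroup M] [Module R M] :
    WithBot ℕ∞ :=
  Order.krullDim (Submodule R M)

/-- `0 → A →f B →g C → 0` is an *almost split sequence* if it is a non-split short exact
sequence, `A` and `C` are indecomposable, and every linear map `h : X → C` which is not a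
split epimorphism factors through `g`. -/
def IsAlmostSplitSequence {Λ A B C : Type} [Ring Λ]
    [AddCommGroup A] [Module Λ A] [AddCommGroup B] [Module Λ B]
    [AddCommGroup C] [Module Λ C]
    (f : A →ₗ[Λ] B) (g : B →ₗ[Λ] C) : Prop :=
  Function.Injective f ∧ Function.Surjective g ∧ LinearMap.range f = LinearMap.ker g ∧
    ¬ IsSplitEpi g ∧ IsIndecomposableModule Λ A ∧ IsIndecomposableModule Λ C ∧
    ∀ (X : Type) [AddCommGroup X] [Module Λ X] (h : X →ₗ[Λ] C),
      ¬ IsSplitEpi h → ∃ h' : X →ₗ[Λ] B, g ∘ₗ h' = h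

/-- In an almost split sequence `0 → A → B → U → 0` of finite-dimensional modules over a
finite-dimensional algebra with `U` uniserial, given an internal direct sum decomposition of
`B` into indecomposable submodules `Bᵢ`, the number of indices `i` for which the restriction
`gᵢ : Bᵢ → U` is surjective is at most `length(soc A)`. -/
theorem card_surjective_components_le_length_socle
    (K Λ A B U : Type) [Field K] [Ring Λ] [Algebra K Λ] [FiniteDimensional K Λ]
    [AddCommGroup A] [Module Λ A] [Module.Finite Λ A]
    [AddCommGroup B] [Module Λ B] [Module.Finite Λ B]
    [AddCommGroup U] [Module Λ U] [Module.Finite Λ U]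
    (hU : IsUniserialModule Λ U)
    (f : A →ₗ[Λ] B) (g : B →ₗ[Λ] U) (hseq : IsAlmostSplitSequence f g)
    (I : Type) [DecidableEq I] (B' : I → Submodule Λ B)
    (hint : DirectSum.IsInternal B')
    (hind : ∀ i, IsIndecomposableModule Λ ↥(B' i)) :
    (Nat.card {i : I // Function.Surjective (g ∘ₗ (B' i).subtype)} : WithBot ℕ∞) ≤
      moduleLength Λ ↥(socle Λ A) := by
  classical
  obtain ⟨hfinj, hgsurj, hexact, hnsplit, hAind, hUind, hfac⟩ := hseq
  -- A is Artinian over Λ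
  letI : Module K A := Module.compHom A (algebraMap K Λ)
  haveI : IsScalarTower K Λ A :=
    ⟨fun x y z => by
      show (x • y) • z = (algebraMap K Λ x) • (y • z)
      rw [Algebra.smul_def, mul_smul]⟩
  haveI : Module.Finite K A := Module.Finite.trans Λ A
  haveI : IsArtinian K A := inferInstance
  haveI hart : IsArtinian Λ A := isArtinian_of_tower K inferInstance
  haveI : IsAtomic (Submodule Λ A) := isAtomic_of_orderBot_wellFounded_lt wellFounded_lt
  -- key step: each surjective component contributes an atom of `Submodule Λ A`
  have key : ∀ i : I, Function.Surjective (g ∘ₗ (B' i).subtype) →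
      ∃ W : Submodule Λ A, IsAtom W ∧ Submodule.map f W ≤ B' i := by
    intro i hi
    have hker : B' i ⊓ LinearMap.ker g ≠ ⊥ := by
      intro hbot
      apply hnsplit
      have hinj : Function.Injective (g ∘ₗ (B' i).subtype) := by
        rw [← LinearMap.ker_eq_bot, eq_bot_iff]
        rintro x hx
        have hx' : g (x : B) = 0 := hx
        have hmem : (x : B) ∈ B' i ⊓ LinearMap.ker g := ⟨x.2, hx'⟩
        rw [hbot, Submodule.mem_bot] at hmem
        exact (Submodule.mem_bot _).mpr (Subtype.ext hmem)
      let e := LinearEquiv.ofBijective (g ∘ₗ (B' i).subtype) ⟨hinj, hi⟩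
      refine ⟨(B' i).subtype ∘ₗ (e.symm : U →ₗ[Λ] ↥(B' i)), ?_⟩
      ext u
      have h := e.apply_symm_apply u
      change (g ∘ₗ (B' i).subtype) (e.symm u) = u at h
      simpa using h
    set V := Submodule.comap f (B' i ⊓ LinearMap.ker g) with hVdef
    have hle : B' i ⊓ LinearMap.ker g ≤ LinearMap.range f := by
      rw [hexact]; exact inf_le_right
    have hVmap : Submodule.map f V = B' i ⊓ LinearMap.ker g := by
      rw [hVdef, Submodule.map_comap_eq, inf_eq_right.mpr hle]
    have hV : V ≠ ⊥ := fun h => hker (by rw [← hVmap, h, Submodule.map_bot])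
    obtain ⟨W, hW, hWV⟩ := (eq_bot_or_exists_atom_le V).resolve_left hV
    exact ⟨W, hW, le_trans (Submodule.map_mono hWV) (hVmap ▸ inf_le_left)⟩
  set S := {i : I // Function.Surjective (g ∘ₗ (B' i).subtype)} with hSdef
  by_cases hfin : Finite S
  · -- finite case: build a strictly increasing chain in the socle
    choose W hWatom hWmap using fun i : S => key i.1 i.2
    set n := Nat.card S with hn
    let e : Fin n ≃ S := (Finite.equivFin S).symm
    let C : ℕ → Submodule Λ A := fun k => ⨆ (j : Fin n) (_ : (j : ℕ) < k), W (e j)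
    have hCmono : Monotone C := fun k k' hkk' =>
      iSup₂_le fun j hj => le_iSup₂ (f := fun (j : Fin n) (_ : (j : ℕ) < k') => W (e j)) j
        (lt_of_lt_of_le hj hkk')
    have hCsoc : ∀ k, C k ≤ socle Λ A := fun k =>
      iSup₂_le fun j _ => le_sSup (isSimpleModule_iff_isAtom.mpr (hWatom (e j)))
    have hstep : ∀ k : Fin n, ¬ W (e k) ≤ C (k : ℕ) := by
      intro k hle
      have h2 : Submodule.map f (C (k : ℕ)) ≤ ⨆ (i : I) (_ : i ≠ (e k).1), B' i := by
        rw [Submodule.map_iSup]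
        refine iSup_le fun j => ?_
        rw [Submodule.map_iSup]
        refine iSup_le fun hj => ?_
        have hne : (e j).1 ≠ (e k).1 := by
          intro hcontra
          have : e j = e k := Subtype.ext hcontra
          have : j = k := e.injective this
          subst this
          exact lt_irrefl _ hj
        exact le_trans (hWmap (e j)) (le_iSup₂ (f := fun (i : I) (_ : i ≠ (e k).1) => B' i)
          (e j).1 hne)
      have hdis : Disjoint (Submodule.map f (W (e k))) (Submodule.map f (C (k : ℕ))) :=
        ((hint.submodule_iSupIndep (e k).1).mono_right h2).mono_left (hWmap (e k))
      have hbot : Submodule.map f (W (e k)) = ⊥ :=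
        hdis.eq_bot_of_le (Submodule.map_mono hle)
      apply (hWatom (e k)).1
      rw [eq_bot_iff]
      intro x hx
      have : f x ∈ Submodule.map f (W (e k)) := Submodule.mem_map_of_mem hx
      rw [hbot, Submodule.mem_bot] at this
      have : f x = f 0 := by simpa using this
      simpa [Submodule.mem_bot] using hfinj this
    let D : Fin (n + 1) → Submodule Λ ↥(socle Λ A) :=
      fun k => Submodule.comap (socle Λ A).subtype (C (k : ℕ))
    have hDlt : ∀ k : Fin n, D k.castSucc < D k.succ := by
      intro k
      refine lt_of_le_of_ne (Submodule.comap_mono (hCmono (by simp))) ?_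
      intro heq
      have hCC : C (k : ℕ) = C ((k : ℕ) + 1) := by
        have h1 := congrArg (Submodule.map (socle Λ A).subtype) heq
        rw [Submodule.map_comap_subtype, Submodule.map_comap_subtype,
          inf_eq_right.mpr (hCsoc _), inf_eq_right.mpr (hCsoc _)] at h1
        simpa using h1
      apply hstep k
      have hWle : W (e k) ≤ C ((k : ℕ) + 1) :=
        le_iSup₂ (f := fun (j : Fin n) (_ : (j : ℕ) < (k : ℕ) + 1) => W (e j)) k
          (Nat.lt_succ_self _)
      rw [← hCC] at hWle
      exact hWle
    let p : LTSeries (Submodule Λ ↥(socle Λ A)) := ⟨n, D, hDlt⟩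
    have hlen := Order.LTSeries.length_le_krullDim p
    exact hlen
  · -- infinite case: `Nat.card` is zero
    haveI : Infinite S := not_finite_iff_infinite.mp hfin
    rw [show Nat.card S = 0 from Nat.card_eq_zero_of_infinite]
    exact_mod_cast Order.krullDim_nonneg
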